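/- Let S, c, C₁, C₂, P₀ ∈ ℝ and let Z : ℝ → ℝ be three times differentiable with 0 < Z(r) < 1 for all r. Define v₂ = c + C₂/(1−Z), G₂ = (v₂ − c)v₂″ − (v₂′)², P = P₀ + Z − (C₁²/(6Z²))(2 Z Z″ − (Z′)² + 3), E₄ = (v₂ − c)v₂′ − Z′ + S·P′ − (1/3)(1−Z)²·G₂′ + (1−Z)·Z′·G₂, α₀ = S·C₁², α₁ = C₂² − α₀, and Φ₁ = −(1/(2Z²(1−Z)²))·[2Z(1−Z)(α₁Z + α₀)Z″ + (α₀(1−2Z) − α₁Z²)(3 − (Z′)²) + 6(1−S)Z³(1−Z)²]. Then for all r ∈ ℝ: Φ₁′(r) = 3·E₄(r). -/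

import Mathlib

/-- Lower-layer traveling-wave velocity v₂ = c + C₂/(1 − Z). -/
noncomputable def v2f (c C₂ : ℝ) (Z : ℝ → ℝ) : ℝ → ℝ := fun r => c + C₂ / (1 - Z r)

/-- G₂ = (v₂ − c)v₂″ − (v₂′)². -/
noncomputable def G2f (c C₂ : ℝ) (Z : ℝ → ℝ) : ℝ → ℝ := fun r =>
  (v2f c C₂ Z r - c) * deriv (deriv (v2f c C₂ Z)) r - (deriv (v2f c C₂ Z) r) ^ 2

/-- Pressure integral P = P₀ + Z − (C₁²/(6Z²))(2ZZ″ − (Z′)² + 3). -/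
noncomputable def Pf (P₀ C₁ : ℝ) (Z : ℝ → ℝ) : ℝ → ℝ := fun r =>
  P₀ + Z r - (C₁ ^ 2 / (6 * (Z r) ^ 2)) *
    (2 * Z r * deriv (deriv Z) r - (deriv Z r) ^ 2 + 3)

/-- The reduced lower-layer momentum equation
E₄ = (v₂ − c)v₂′ − Z′ + S·P′ − (1/3)(1−Z)²·G₂′ + (1−Z)·Z′·G₂. -/
noncomputable def E4f (S c C₁ C₂ P₀ : ℝ) (Z : ℝ → ℝ) : ℝ → ℝ := fun r =>
  (v2f c C₂ Z r - c) * deriv (v2f c C₂ Z) r - deriv Z r + S * deriv (Pf P₀ C₁ Z) r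
    - (1/3) * (1 - Z r) ^ 2 * deriv (G2f c C₂ Z) r
    + (1 - Z r) * deriv Z r * G2f c C₂ Z r

/-- The first integral Φ₁. -/
noncomputable def Phi1f (S α₀ α₁ : ℝ) (Z : ℝ → ℝ) : ℝ → ℝ := fun r =>
  -(1 / (2 * (Z r) ^ 2 * (1 - Z r) ^ 2)) *
    (2 * Z r * (1 - Z r) * (α₁ * Z r + α₀) * deriv (deriv Z) r
      + (α₀ * (1 - 2 * Z r) - α₁ * (Z r) ^ 2) * (3 - (deriv Z r) ^ 2)
      + 6 * (1 - S) * (Z r) ^ 3 * (1 - Z r) ^ 2)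

theorem stmt6 (S c C₁ C₂ P₀ : ℝ) (Z : ℝ → ℝ)
    (hZ : Differentiable ℝ Z) (hZ' : Differentiable ℝ (deriv Z))
    (hZ'' : Differentiable ℝ (deriv (deriv Z)))
    (hrange : ∀ r : ℝ, 0 < Z r ∧ Z r < 1) :
    ∀ r : ℝ, deriv (Phi1f S (S * C₁ ^ 2) (C₂ ^ 2 - S * C₁ ^ 2) Z) r
      = 3 * E4f S c C₁ C₂ P₀ Z r := by
  have hz0 : ∀ r, Z r ≠ 0 := fun r => ne_of_gt (hrange r).1
  have h1z : ∀ r, (1 : ℝ) - Z r ≠ 0 := fun r => ne_of_gt (by linarith [(hrange r).2])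
  -- first derivative of v₂
  have hv2d : deriv (v2f c C₂ Z) = fun r => C₂ * deriv Z r / (1 - Z r) ^ 2 := by
    funext r
    have h1 : HasDerivAt (fun x => 1 - Z x) (-(deriv Z r)) r := (hZ r).hasDerivAt.const_sub 1
    have h2 : HasDerivAt (v2f c C₂ Z)
        ((0 * (1 - Z r) - C₂ * (-(deriv Z r))) / (1 - Z r) ^ 2) r :=
      ((hasDerivAt_const r C₂).div h1 (h1z r)).const_add c
    rw [h2.deriv]; ring
  -- second derivative of v₂
  have hv2dd : deriv (deriv (v2f c C₂ Z)) = fun r =>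
      C₂ * (deriv (deriv Z) r * (1 - Z r) + 2 * (deriv Z r) ^ 2) / (1 - Z r) ^ 3 := by
    rw [hv2d]; funext r
    have h1 : HasDerivAt (fun x => 1 - Z x) (-(deriv Z r)) r := (hZ r).hasDerivAt.const_sub 1
    have h2 : HasDerivAt (fun x => C₂ * deriv Z x / (1 - Z x) ^ 2) _ r :=
      ((hZ' r).hasDerivAt.const_mul C₂).div (h1.pow 2) (pow_ne_zero 2 (h1z r))
    rw [h2.deriv]
    have hn := h1z r
    field_simp
    ring
  -- closed form of G₂
  have hG2eq : G2f c C₂ Z = fun r =>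
      C₂ ^ 2 * (deriv (deriv Z) r * (1 - Z r) + (deriv Z r) ^ 2) / (1 - Z r) ^ 4 := by
    funext r
    simp only [G2f, v2f, hv2dd]
    simp only [hv2d]
    have hn := h1z r
    field_simp
    ring
  intro r
  have hZat := (hZ r).hasDerivAt
  have hZ'at := (hZ' r).hasDerivAt
  have hZ''at := (hZ'' r).hasDerivAt
  have h1 : HasDerivAt (fun x => 1 - Z x) (-(deriv Z r)) r := hZat.const_sub 1
  -- derivative of G₂
  have hG2' : HasDerivAt (G2f c C₂ Z)
      (C₂ ^ 2 * ((deriv (deriv (deriv Z)) r * (1 - Z r) + deriv Z r * deriv (deriv Z) r) * (1 - Z r)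
        + 4 * deriv Z r * (deriv (deriv Z) r * (1 - Z r) + (deriv Z r) ^ 2)) / (1 - Z r) ^ 5) r := by
    rw [hG2eq]
    have h2 : HasDerivAt (fun x => C₂ ^ 2 * (deriv (deriv Z) x * (1 - Z x) + (deriv Z x) ^ 2)
        / (1 - Z x) ^ 4) _ r :=
      (((hZ''at.mul h1).add (hZ'at.pow 2)).const_mul (C₂ ^ 2)).div (h1.pow 4)
        (pow_ne_zero 4 (h1z r))
    convert h2 using 1
    simp only [Pi.add_apply, Pi.mul_apply, Pi.pow_apply]
    have hn := h1z r
    field_simp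
    ring
  -- derivative of P
  have hP' : HasDerivAt (Pf P₀ C₁ Z)
      (deriv Z r - C₁ ^ 2 / 6 * (2 * (Z r) ^ 2 * deriv (deriv (deriv Z)) r
        - 2 * deriv Z r * (2 * Z r * deriv (deriv Z) r - (deriv Z r) ^ 2 + 3)) / (Z r) ^ 3) r := by
    have h6 : (6 : ℝ) * (Z r) ^ 2 ≠ 0 := by
      have := hz0 r; positivity
    have hA : HasDerivAt (fun x => C₁ ^ 2 / (6 * (Z x) ^ 2)) _ r :=
      (hasDerivAt_const r (C₁ ^ 2)).div ((hZat.pow 2).const_mul 6) h6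
    have hB : HasDerivAt (fun x => 2 * Z x * deriv (deriv Z) x - (deriv Z x) ^ 2 + 3) _ r :=
      (((hZat.const_mul 2).mul hZ''at).sub (hZ'at.pow 2)).add_const 3
    have h2 : HasDerivAt (Pf P₀ C₁ Z) _ r := (hZat.const_add P₀).sub (hA.mul hB)
    convert h2 using 1
    have hn := hz0 r
    field_simp
    ring
  -- derivative of Φ₁ via its restructured form
  have hPhiEq : Phi1f S (S * C₁ ^ 2) (C₂ ^ 2 - S * C₁ ^ 2) Z = fun x =>
      -((2 * Z x * (1 - Z x) * ((C₂ ^ 2 - S * C₁ ^ 2) * Z x + S * C₁ ^ 2) * deriv (deriv Z) x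
        + (S * C₁ ^ 2 * (1 - 2 * Z x) - (C₂ ^ 2 - S * C₁ ^ 2) * (Z x) ^ 2) * (3 - (deriv Z x) ^ 2)
        + 6 * (1 - S) * (Z x) ^ 3 * (1 - Z x) ^ 2)
        / (2 * (Z x) ^ 2 * (1 - Z x) ^ 2)) := by
    funext x
    simp only [Phi1f]
    ring
  have hT1 : HasDerivAt (fun x => 2 * Z x * (1 - Z x)
      * ((C₂ ^ 2 - S * C₁ ^ 2) * Z x + S * C₁ ^ 2) * deriv (deriv Z) x) _ r :=
    (((hZat.const_mul 2).mul h1).mul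
      ((hZat.const_mul (C₂ ^ 2 - S * C₁ ^ 2)).add_const (S * C₁ ^ 2))).mul hZ''at
  have hT2 : HasDerivAt (fun x => (S * C₁ ^ 2 * (1 - 2 * Z x)
      - (C₂ ^ 2 - S * C₁ ^ 2) * (Z x) ^ 2) * (3 - (deriv Z x) ^ 2)) _ r :=
    (((hZat.const_mul 2).const_sub 1).const_mul (S * C₁ ^ 2)
      |>.sub ((hZat.pow 2).const_mul (C₂ ^ 2 - S * C₁ ^ 2))).mul ((hZ'at.pow 2).const_sub 3)
  have hT3 : HasDerivAt (fun x => 6 * (1 - S) * (Z x) ^ 3 * (1 - Z x) ^ 2) _ r :=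
    ((hZat.pow 3).const_mul (6 * (1 - S))).mul (h1.pow 2)
  have hDen : HasDerivAt (fun x => 2 * (Z x) ^ 2 * (1 - Z x) ^ 2) _ r :=
    ((hZat.pow 2).const_mul 2).mul (h1.pow 2)
  have hDne : 2 * (Z r) ^ 2 * (1 - Z r) ^ 2 ≠ 0 := by
    have := hz0 r; have := h1z r
    positivity
  have hPhi' := (((hT1.add hT2).add hT3).div hDen hDne).neg
  simp only [Pi.add_def, Pi.sub_def, Pi.mul_def, Pi.div_def, Pi.neg_def, Pi.pow_def] at hPhi'
  rw [hPhiEq, hPhi'.deriv]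
  simp only [E4f]
  rw [hP'.deriv, hG2'.deriv]
  simp only [hG2eq, hv2d, v2f]
  have hz := hz0 r
  have h1zr := h1z r
  field_simp
  ring
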